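/- (Existence of Fusions) Let 𝓟 be a finite indexed family of machines over T and let f, m be natural numbers. There exists a family 𝓕 of m machines over T with d_min(𝓟 ⊕ 𝓕) > f (i.e., an (f, m)-fusion of 𝓟 exists) if and only if m + d_min(𝓟) > f. -/

import Mathlib

open scoped Classical

/-- A machine over `T` (a closed partition of `T`): an equivalence relation on `T`
that is preserved by the transition function `δ`. -/
structure Machine (T : Type*) (E : Type*) (δ : T → E → T) where
  rel : T → T → Prop
  equiv : Equivalence rel
  closed : ∀ x y : T, rel x y → ∀ e : E, rel (δ x e) (δ y e)

/-- The distance `d_𝓜(t,t')`: the number of machines in the family `M` that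
separate `t` and `t'`. -/
noncomputable def fdist {T E ι : Type*} {δ : T → E → T} [Fintype ι]
    (M : ι → Machine T E δ) (t t' : T) : ℕ :=
  (Finset.univ.filter fun i => ¬ (M i).rel t t').card

/-- The minimum distance `d_min(𝓜)`: the minimum of `fdist M t t'` over all pairs
of distinct states `t ≠ t'`. -/
noncomputable def dmin {T E ι : Type*} {δ : T → E → T} [Fintype ι]
    (M : ι → Machine T E δ) : ℕ :=
  sInf {d : ℕ | ∃ t t' : T, t ≠ t' ∧ d = fdist M t t'}

lemma filter_sum_card {α β : Type*} [Fintype α] [Fintype β] (p : α ⊕ β → Prop)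
    [DecidablePred p] :
    (Finset.univ.filter p).card = (Finset.univ.filter (fun a => p (Sum.inl a))).card +
      (Finset.univ.filter (fun b => p (Sum.inr b))).card := by
  rw [← Finset.card_toLeft_add_card_toRight]
  congr 1 <;> (apply congrArg; ext x; simp)

lemma fdist_sum_elim {T E I J : Type*} [Fintype I] [Fintype J] {δ : T → E → T}
    (P : I → Machine T E δ) (F : J → Machine T E δ) (t t' : T) :
    fdist (Sum.elim P F) t t' = fdist P t t' + fdist F t t' := by
  classical
  unfold fdist
  exact filter_sum_card _

/-- The equality machine. -/
def eqMachine {T E : Type*} (δ : T → E → T) : Machine T E δ :=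
  ⟨Eq, eq_equivalence, fun x y h e => by rw [h]⟩

lemma dmin_set_nonempty {T E ι : Type*} {δ : T → E → T} [Nontrivial T] [Fintype ι]
    (M : ι → Machine T E δ) :
    {d : ℕ | ∃ t t' : T, t ≠ t' ∧ d = fdist M t t'}.Nonempty := by
  obtain ⟨t, t', h⟩ := exists_pair_ne T
  exact ⟨fdist M t t', t, t', h, rfl⟩

theorem fusion_exists_iff {T E I : Type*} [Fintype T] [Nontrivial T] [Fintype I]
    {δ : T → E → T} (P : I → Machine T E δ) (f m : ℕ) :
    (∃ F : Fin m → Machine T E δ, dmin (Sum.elim P F) > f) ↔ m + dmin P > f := by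
  classical
  constructor
  · rintro ⟨F, hF⟩
    obtain ⟨t, t', hne, hd⟩ := Nat.sInf_mem (dmin_set_nonempty P)
    have h1 : dmin (Sum.elim P F) ≤ fdist (Sum.elim P F) t t' :=
      Nat.sInf_le ⟨t, t', hne, rfl⟩
    have h2 : fdist F t t' ≤ m := by
      unfold fdist
      exact (Finset.card_filter_le _ _).trans (by simp)
    have h3 : fdist P t t' = dmin P := hd.symm
    have h4 := fdist_sum_elim P F t t'
    omega
  · intro h
    refine ⟨fun _ => eqMachine δ, ?_⟩
    have : ∀ d ∈ {d : ℕ | ∃ t t' : T, t ≠ t' ∧ d = fdist (Sum.elim P (fun _ : Fin m => eqMachine δ)) t t'}, f < d := by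
      rintro d ⟨t, t', hne, rfl⟩
      rw [fdist_sum_elim]
      have h1 : dmin P ≤ fdist P t t' := Nat.sInf_le ⟨t, t', hne, rfl⟩
      have h2 : fdist (fun _ : Fin m => eqMachine δ) t t' = m := by
        unfold fdist
        simp [eqMachine, hne]
      omega
    exact this _ (Nat.sInf_mem (dmin_set_nonempty _))
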